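/- arXiv:1306.4850 — 3 statements merged into one kernel-verified Lean document; each statement's English description precedes it below -/
import Mathlib

section
/- Let K = {x ∈ ℝⁿ : ⟨aᵢ, x⟩ ≤ bᵢ, i = 1,…,m} be a convex polyhedron containing the origin, with aᵢ ≠ 0 for all i (so bᵢ ≥ 0 for all i). Then K* = { Σᵢ μᵢ aᵢ : μᵢ ≥ 0 for all i, and Σᵢ μᵢ bᵢ ≤ 1 }. -/
section Aux

open Topology

variable {ι : Type*} [Fintype ι] [DecidableEq ι]

open Finset

/-- Carathéodory-type reduction for cones. -/
lemma cone_cara {E : Type*} [AddCommGroup E] [Module ℝ E] (v : ι → E) :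
    ∀ (N : ℕ) (μ : ι → ℝ), (univ.filter (fun i => μ i ≠ 0)).card ≤ N → (∀ i, 0 ≤ μ i) →
      ∃ (s : Finset ι) (ν : ι → ℝ), LinearIndependent ℝ (fun i : s => v i) ∧ (∀ i, 0 ≤ ν i) ∧
        (∀ i ∉ s, ν i = 0) ∧ ∑ i, ν i • v i = ∑ i, μ i • v i := by
  intro N
  induction N with
  | zero =>
    intro μ hcard hμ
    have hμ0 : ∀ i, μ i = 0 := by
      intro i
      by_contra h
      have : i ∈ univ.filter (fun i => μ i ≠ 0) := by simp [h]
      have := Finset.card_pos.2 ⟨i, this⟩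
      omega
    refine ⟨∅, 0, ?_, by simp, by simp, by simp [hμ0]⟩
    exact linearIndependent_empty_type
  | succ N ih =>
    intro μ hcard hμ
    set T := univ.filter (fun i => μ i ≠ 0) with hT
    by_cases hli : LinearIndependent ℝ (fun i : T => v i)
    · refine ⟨T, μ, hli, hμ, ?_, rfl⟩
      intro i hi
      by_contra h
      exact hi (by simp [hT, h])
    · obtain ⟨g, hg0, j₀, hgj₀⟩ := Fintype.not_linearIndependent_iff.mp hli
      set c : ι → ℝ := fun i => if h : i ∈ T then g ⟨i, h⟩ else 0 with hc
      have hcsum : ∑ i, c i • v i = 0 := by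
        have h1 : ∑ i, c i • v i = ∑ i ∈ T, c i • v i := by
          refine (Finset.sum_subset (Finset.subset_univ _) ?_).symm
          intro i _ hi
          simp [hc, hi]
        rw [h1, ← Finset.sum_attach T (fun i => c i • v i)]
        rw [← hg0, Finset.univ_eq_attach]
        refine Finset.sum_congr rfl ?_
        intro i _
        simp [hc, i.2]
      have hcT : ∀ i, i ∉ T → c i = 0 := fun i hi => by simp [hc, hi]
      -- arrange a positive coefficient
      set d : ι → ℝ := if ∃ i, 0 < c i then c else -c with hd
      have hdsum : ∑ i, d i • v i = 0 := by
        by_cases hP : ∃ i, 0 < c i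
        · simp only [hd, if_pos hP]; exact hcsum
        · simp only [hd, if_neg hP, Pi.neg_apply, neg_smul, Finset.sum_neg_distrib, hcsum,
            neg_zero]
      have hdT : ∀ i, i ∉ T → d i = 0 := by
        intro i hi
        by_cases hP : ∃ i, 0 < c i <;> simp [hd, hP, hcT i hi]
      have hdpos : ∃ i, 0 < d i := by
        by_cases hP : ∃ i, 0 < c i
        · simpa [hd, hP] using hP
        · have hP2 : ∀ i, c i ≤ 0 := fun i => not_lt.1 (fun h => hP ⟨i, h⟩)
          refine ⟨(j₀ : ι), ?_⟩
          have h1 : c (j₀ : ι) = g j₀ := by simp [hc, j₀.2]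
          have h2 : c (j₀ : ι) ≠ 0 := by rw [h1]; exact hgj₀
          have h3 : c (j₀ : ι) < 0 := lt_of_le_of_ne (hP2 _) h2
          simp only [hd, if_neg hP, Pi.neg_apply]
          linarith
      set Q := univ.filter (fun i => 0 < d i) with hQ
      have hQne : Q.Nonempty := by
        obtain ⟨i, hi⟩ := hdpos
        exact ⟨i, by simp [hQ, hi]⟩
      obtain ⟨i₀, hi₀Q, hmin⟩ := Q.exists_min_image (fun i => μ i / d i) hQne
      have hdi₀ : 0 < d i₀ := by simpa [hQ] using hi₀Q
      set t := μ i₀ / d i₀ with ht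
      have ht0 : 0 ≤ t := div_nonneg (hμ i₀) hdi₀.le
      set μ' : ι → ℝ := fun i => μ i - t * d i with hμ'
      have hμ'0 : ∀ i, 0 ≤ μ' i := by
        intro i
        by_cases hdi : 0 < d i
        · have := hmin i (by simp [hQ, hdi])
          have := (le_div_iff₀ hdi).mp this
          simp only [hμ']; linarith
        · push_neg at hdi
          have : t * d i ≤ 0 := mul_nonpos_of_nonneg_of_nonpos ht0 hdi
          have := hμ i
          simp only [hμ']; linarith
      have hμ'i₀ : μ' i₀ = 0 := by
        simp only [hμ', ht]
        field_simp
        ring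
      have hi₀T : i₀ ∈ T := by
        by_contra h
        exact absurd (hdT i₀ h) hdi₀.ne'
      have hsub : univ.filter (fun i => μ' i ≠ 0) ⊆ T.erase i₀ := by
        intro i hi
        simp only [mem_filter, mem_univ, true_and] at hi
        refine Finset.mem_erase.mpr ⟨?_, ?_⟩
        · rintro rfl; exact hi hμ'i₀
        · by_contra hiT
          have h1 : μ i = 0 := by
            by_contra h
            exact hiT (by simp [hT, h])
          have h2 : d i = 0 := hdT i hiT
          exact hi (by simp [hμ', h1, h2])
      have hcard' : (univ.filter (fun i => μ' i ≠ 0)).card ≤ N := by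
        have h1 := Finset.card_le_card hsub
        have h2 : (T.erase i₀).card = T.card - 1 := Finset.card_erase_of_mem hi₀T
        have h3 : 1 ≤ T.card := Finset.card_pos.2 ⟨i₀, hi₀T⟩
        omega
      obtain ⟨s, ν, h1, h2, h3, h4⟩ := ih μ' hcard' hμ'0
      refine ⟨s, ν, h1, h2, h3, ?_⟩
      rw [h4]
      have : ∑ i, μ' i • v i = ∑ i, μ i • v i - t • ∑ i, d i • v i := by
        rw [Finset.smul_sum, ← Finset.sum_sub_distrib]
        refine Finset.sum_congr rfl fun i _ => ?_
        simp [hμ', sub_smul, smul_smul]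
      rw [this, hdsum, smul_zero, sub_zero]

/-- A finitely generated cone is closed. -/
lemma cone_closed {E : Type*} [NormedAddCommGroup E] [NormedSpace ℝ E] [FiniteDimensional ℝ E]
    (v : ι → E) :
    IsClosed {x : E | ∃ μ : ι → ℝ, (∀ i, 0 ≤ μ i) ∧ x = ∑ i, μ i • v i} := by
  have hEq : {x : E | ∃ μ : ι → ℝ, (∀ i, 0 ≤ μ i) ∧ x = ∑ i, μ i • v i} =
      ⋃ (s : {s : Finset ι // LinearIndependent ℝ (fun i : s => v i)}),
        (fun (μ : s.1 → ℝ) => ∑ i, μ i • v (i : ι)) '' {μ | ∀ i, 0 ≤ μ i} := by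
    ext x
    simp only [Set.mem_setOf_eq, Set.mem_iUnion, Set.mem_image]
    constructor
    · rintro ⟨μ, hμ, rfl⟩
      obtain ⟨s, ν, hli, hν, hνs, hsum⟩ :=
        cone_cara v (univ.filter (fun i => μ i ≠ 0)).card μ le_rfl hμ
      refine ⟨⟨s, hli⟩, fun i => ν i, fun i => hν i, ?_⟩
      rw [← hsum, Finset.sum_coe_sort s (fun i => ν i • v i)]
      exact Finset.sum_subset (f := fun i => ν i • v i) (Finset.subset_univ _)
        (fun i _ hi => by simp [hνs i hi])
    · rintro ⟨⟨s, hli⟩, μ, hμ, rfl⟩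
      classical
      refine ⟨fun i => if h : i ∈ s then μ ⟨i, h⟩ else 0, ?_, ?_⟩
      · intro i
        by_cases h : i ∈ s <;> simp [h, hμ]
      · rw [show (∑ i, (fun i => if h : i ∈ s then μ ⟨i, h⟩ else 0) i • v i)
            = ∑ i ∈ s, (if h : i ∈ s then μ ⟨i, h⟩ else (0:ℝ)) • v i from
            (Finset.sum_subset (Finset.subset_univ s) (fun i _ hi => by simp [hi])).symm]
        rw [← Finset.sum_coe_sort s (fun i => (if h : i ∈ s then μ ⟨i, h⟩ else (0:ℝ)) • v i)]
        exact (Finset.sum_congr rfl fun i _ => by simp [i.2]).symm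
  rw [hEq]
  refine isClosed_iUnion_of_finite ?_
  rintro ⟨s, hs⟩
  let L : (s → ℝ) →ₗ[ℝ] E :=
    { toFun := fun μ => ∑ i, μ i • v (i : ι)
      map_add' := by intro x y; simp [add_smul, Finset.sum_add_distrib]
      map_smul' := by intro c x; simp [smul_smul, Finset.smul_sum] }
  have hker : LinearMap.ker L = ⊥ := by
    rw [LinearMap.ker_eq_bot']
    intro μ hμ
    funext i
    exact Fintype.linearIndependent_iff.mp hs μ hμ i
  have hemb : IsClosedEmbedding L := LinearMap.isClosedEmbedding_of_injective hker
  have horth : IsClosed {μ : s → ℝ | ∀ i, 0 ≤ μ i} := by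
    have : {μ : s → ℝ | ∀ i, 0 ≤ μ i} = ⋂ i, {μ : s → ℝ | 0 ≤ μ i} := by
      ext; simp
    rw [this]
    exact isClosed_iInter fun i => isClosed_le continuous_const (continuous_apply i)
  exact hemb.isClosedMap _ horth

end Aux

def polar {n : ℕ} (K : Set (EuclideanSpace ℝ (Fin n))) : Set (EuclideanSpace ℝ (Fin n)) :=
  {y | ∀ x ∈ K, (inner ℝ x y : ℝ) ≤ 1}

theorem polar_polyhedron {n m : ℕ} (a : Fin m → EuclideanSpace ℝ (Fin n)) (b : Fin m → ℝ)
    (ha : ∀ i, a i ≠ 0)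
    (h0 : ∀ i, (inner ℝ (a i) (0 : EuclideanSpace ℝ (Fin n)) : ℝ) ≤ b i) :
    polar {x | ∀ i, (inner ℝ (a i) x : ℝ) ≤ b i} =
      {y | ∃ μ : Fin m → ℝ, (∀ i, 0 ≤ μ i) ∧ (∑ i, μ i * b i) ≤ 1 ∧ y = ∑ i, μ i • a i} := by
  classical
  have hb : ∀ i, 0 ≤ b i := fun i => by simpa using h0 i
  ext y
  simp only [polar, Set.mem_setOf_eq]
  constructor
  · -- hard direction
    intro hy
    let E := EuclideanSpace ℝ (Fin n)
    let H := WithLp 2 (E × ℝ)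
    let w' : Fin m ⊕ Unit → E × ℝ := Sum.elim (fun i => (a i, b i)) (fun _ => (0, 1))
    let w : Fin m ⊕ Unit → H := fun i => (WithLp.equiv 2 (E × ℝ)).symm (w' i)
    let C : Set H := {x : H | ∃ μ : Fin m ⊕ Unit → ℝ, (∀ i, 0 ≤ μ i) ∧ x = ∑ i, μ i • w i}
    let Ccone : ConvexCone ℝ H :=
      { carrier := C
        smul_mem' := by
          rintro c hc x ⟨μ, hμ, rfl⟩
          exact ⟨c • μ, fun i => mul_nonneg hc.le (hμ i), by
            simp [Finset.smul_sum, smul_smul]⟩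
        add_mem' := by
          rintro x ⟨μ, hμ, rfl⟩ z ⟨ν, hν, rfl⟩
          exact ⟨μ + ν, fun i => add_nonneg (hμ i) (hν i), by
            simp [add_smul, Finset.sum_add_distrib]⟩ }
    have hCne : (Ccone : Set H).Nonempty := ⟨0, 0, fun _ => le_rfl, (Finset.sum_eq_zero fun i _ => by simp).symm⟩
    have hCc : IsClosed (Ccone : Set H) := cone_closed w
    let p : H := (WithLp.equiv 2 (E × ℝ)).symm (y, 1)
    by_cases hmem : p ∈ Ccone
    · obtain ⟨μ, hμ, hsum⟩ := hmem
      have h5 : ((y, 1) : E × ℝ) = ∑ i, μ i • w' i := by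
        have h6 := congrArg (WithLp.linearEquiv 2 ℝ (E × ℝ)) hsum
        rw [map_sum] at h6
        simp only [map_smul, WithLp.linearEquiv_apply, w, p, WithLp.equiv_symm_apply,
          WithLp.ofLp_toLp] at h6
        exact h6
      have hfst : y = ∑ i, μ i • (w' i).1 := by
        have := congrArg Prod.fst h5
        simpa [Prod.fst_sum] using this
      have hsnd : (1 : ℝ) = ∑ i, μ i • (w' i).2 := by
        have := congrArg Prod.snd h5
        simpa [Prod.snd_sum] using this
      refine ⟨fun i => μ (Sum.inl i), fun i => hμ _, ?_, ?_⟩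
      · rw [Fintype.sum_sum_type] at hsnd
        simp only [w', Sum.elim_inl, Sum.elim_inr, smul_eq_mul] at hsnd
        have h3 : (1:ℝ) = ∑ i, μ (Sum.inl i) * b i + μ (Sum.inr ()) := by
          simpa using hsnd
        have := hμ (Sum.inr ())
        linarith
      · rw [Fintype.sum_sum_type] at hfst
        simp only [w', Sum.elim_inl, Sum.elim_inr, smul_zero] at hfst
        simpa using hfst
    · -- separation gives a contradiction
      exfalso
      obtain ⟨z, hz1, hz2⟩ :=
        ProperCone.hyperplane_separation' (E := H)
          ({ toSubmodule := Ccone.toPointedCone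
              (show (0:H) ∈ Ccone from ⟨0, fun _ => le_rfl, (Finset.sum_eq_zero fun i _ => by simp).symm⟩),
             isClosed' := hCc } : ProperCone ℝ H) hmem
      set x : E := z.fst with hx
      set t : ℝ := z.snd with htdef
      have hwmem : ∀ i : Fin m ⊕ Unit, w i ∈ Ccone := by
        intro i
        refine ⟨fun j => if j = i then 1 else 0, fun j => by positivity, ?_⟩
        rw [Finset.sum_eq_single i (fun j _ hj => by simp [hj]) (by simp)]
        simp
      have hinner : ∀ i : Fin m ⊕ Unit,
          (0:ℝ) ≤ inner ℝ ((w' i).1) x + (w' i).2 * t := by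
        intro i
        have h7 := hz1 (w i) (hwmem i)
        rw [WithLp.prod_inner_apply] at h7
        simpa [w, WithLp.equiv_symm_apply, hx, htdef, mul_comm, RCLike.inner_apply,
          conj_trivial] using h7
      have hai : ∀ i : Fin m, (0:ℝ) ≤ inner ℝ (a i) x + b i * t := by
        intro i
        simpa [w'] using hinner (Sum.inl i)
      have htpos : (0:ℝ) ≤ t := by
        simpa [w'] using hinner (Sum.inr ())
      have hneg : (inner ℝ x y : ℝ) + t < 0 := by
        have h8 := hz2
        rw [WithLp.prod_inner_apply] at h8
        simpa [p, WithLp.equiv_symm_apply, hx, htdef, mul_comm, RCLike.inner_apply,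
          conj_trivial, real_inner_comm] using h8
      rcases eq_or_lt_of_le htpos with ht0 | htpos'
      · -- t = 0
        have hxy : (inner ℝ x y : ℝ) < 0 := by rw [← ht0] at hneg; linarith
        set s : ℝ := 2 / (-(inner ℝ x y : ℝ)) with hs
        have hspos : 0 < s := div_pos two_pos (by linarith)
        have hmemK : ∀ i, (inner ℝ (a i) ((-s) • x) : ℝ) ≤ b i := by
          intro i
          rw [real_inner_smul_right]
          have h1 : (0:ℝ) ≤ inner ℝ (a i) x := by
            have := hai i; rw [← ht0] at this; linarith
          nlinarith [hb i, mul_nonneg hspos.le h1]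
        have hle := hy ((-s) • x) hmemK
        rw [real_inner_smul_left] at hle
        have h2 : -s * (inner ℝ x y : ℝ) = 2 := by
          rw [hs]; field_simp
          exact div_self hxy.ne
        linarith
      · -- t > 0
        have hmemK : ∀ i, (inner ℝ (a i) ((-t⁻¹) • x) : ℝ) ≤ b i := by
          intro i
          rw [real_inner_smul_right]
          have h1 := hai i
          have h2 : -(inner ℝ (a i) x : ℝ) ≤ b i * t := by linarith
          calc -t⁻¹ * (inner ℝ (a i) x : ℝ) = t⁻¹ * (-(inner ℝ (a i) x : ℝ)) := by ring
            _ ≤ t⁻¹ * (b i * t) := mul_le_mul_of_nonneg_left h2 (inv_nonneg.mpr htpos'.le)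
            _ = b i := by field_simp
        have hle := hy ((-t⁻¹) • x) hmemK
        rw [real_inner_smul_left] at hle
        have h9 := mul_le_mul_of_nonneg_left hle htpos'.le
        have h10 : t * (-t⁻¹ * (inner ℝ x y : ℝ)) = -(inner ℝ x y : ℝ) := by
          field_simp
        rw [h10, mul_one] at h9
        linarith
  · -- easy direction
    rintro ⟨μ, hμ, hμb, rfl⟩
    intro x hx
    rw [inner_sum]
    calc ∑ i, (inner ℝ x (μ i • a i) : ℝ) = ∑ i, μ i * (inner ℝ (a i) x : ℝ) := by
          refine Finset.sum_congr rfl fun i _ => ?_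
          rw [real_inner_smul_right, real_inner_comm]
      _ ≤ ∑ i, μ i * b i :=
          Finset.sum_le_sum fun i _ => mul_le_mul_of_nonneg_left (hx i) (hμ i)
      _ ≤ 1 := hμb
end

section
/- (Strong LP duality) Let A be a real m×n matrix, b ∈ ℝᵐ, c ∈ ℝⁿ. Suppose the primal program 'maximise ⟨c, x⟩ subject to Ax ≤ b' is feasible and bounded (the set {⟨c,x⟩ : Ax ≤ b} is nonempty and bounded above). Then the dual 'minimise ⟨b, y⟩ subject to Aᵀy = c, y ≥ 0' is feasible, and sup{⟨c,x⟩ : Ax ≤ b} = inf{⟨b,y⟩ : Aᵀy = c, y ≥ 0}. -/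
open scoped Matrix
open Finset

lemma conic_caratheodory {ι : Type*} [Fintype ι] [DecidableEq ι] {E : Type*} [AddCommGroup E]
    [Module ℝ E] (v : ι → E) :
    ∀ (N : ℕ) (y : ι → ℝ), (univ.filter fun i => y i ≠ 0).card ≤ N → 0 ≤ y →
      ∃ z : ι → ℝ, 0 ≤ z ∧ ∑ i, z i • v i = ∑ i, y i • v i ∧
        LinearIndependent ℝ (fun i : {i // z i ≠ 0} => v i) := by
  intro N
  induction N with
  | zero =>
    intro y hcard _
    have hy0 : y = 0 := by
      funext i
      simp only [Pi.zero_apply]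
      by_contra hi
      have : i ∈ univ.filter fun i => y i ≠ 0 := by simp [hi]
      have := card_pos.mpr ⟨i, this⟩
      omega
    subst hy0
    refine ⟨0, le_refl _, rfl, ?_⟩
    have : IsEmpty {i // (0 : ι → ℝ) i ≠ 0} := ⟨fun i => i.2 rfl⟩
    exact linearIndependent_empty_type
  | succ N ih =>
    intro y hcard hy
    by_cases hli : LinearIndependent ℝ (fun i : {i // y i ≠ 0} => v i)
    · exact ⟨y, hy, rfl, hli⟩
    obtain ⟨g, hgsum, i₀, hgi₀⟩ := Fintype.not_linearIndependent_iff.mp hli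
    set G : ι → ℝ := fun i => if h : y i ≠ 0 then g ⟨i, h⟩ else 0 with hG
    have hGsupp : ∀ i, y i = 0 → G i = 0 := by
      intro i hi; simp [hG, hi]
    have hGsum : ∑ i, G i • v i = 0 := by
      calc ∑ i : ι, G i • v i
          = ∑ i ∈ univ.filter (fun i => y i ≠ 0), G i • v i := by
            refine (Finset.sum_filter_of_ne ?_).symm
            intro i _ h hyi
            exact h (by rw [hGsupp i hyi, zero_smul])
        _ = ∑ i : {i // y i ≠ 0}, G ↑i • v ↑i :=
            Finset.sum_subtype _ (by simp) _
        _ = ∑ i : {i // y i ≠ 0}, g i • v ↑i := by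
            refine Finset.sum_congr rfl fun i _ => ?_
            simp [hG, i.2]
        _ = 0 := hgsum
    have hGne : G (i₀ : ι) ≠ 0 := by simpa [hG, i₀.2] using hgi₀
    obtain ⟨W, hWsum, hWsupp, iW, hiW⟩ :
        ∃ W : ι → ℝ, ∑ i, W i • v i = 0 ∧ (∀ i, y i = 0 → W i = 0) ∧ ∃ i, 0 < W i := by
      rcases lt_or_gt_of_ne hGne with h | h
      · refine ⟨-G, ?_, fun i hi => by simp [hGsupp i hi], ⟨i₀, by simpa using h⟩⟩
        simp only [Pi.neg_apply, neg_smul, Finset.sum_neg_distrib, hGsum, neg_zero]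
      · exact ⟨G, hGsum, hGsupp, ⟨i₀, h⟩⟩
    have hTne : (univ.filter fun i => 0 < W i).Nonempty := ⟨iW, by simp [hiW]⟩
    obtain ⟨i₁, hi₁mem, hi₁min⟩ := Finset.exists_min_image _ (fun i => y i / W i) hTne
    have hWi₁ : 0 < W i₁ := by simpa using hi₁mem
    set t : ℝ := y i₁ / W i₁ with ht
    have ht0 : 0 ≤ t := div_nonneg (hy i₁) hWi₁.le
    set z : ι → ℝ := fun i => y i - t * W i with hz
    have hz0 : 0 ≤ z := by
      intro i
      simp only [hz, Pi.zero_apply]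
      by_cases hWi : 0 < W i
      · have h1 : t ≤ y i / W i := hi₁min i (by simp [hWi])
        have h2 := (le_div_iff₀ hWi).mp h1
        linarith
      · push_neg at hWi
        have h3 : t * W i ≤ 0 := mul_nonpos_of_nonneg_of_nonpos ht0 hWi
        have h4 : 0 ≤ y i := hy i
        linarith
    have hzsum : ∑ i, z i • v i = ∑ i, y i • v i := by
      simp only [hz, sub_smul, Finset.sum_sub_distrib, mul_smul, ← Finset.smul_sum, hWsum,
        smul_zero, sub_zero]
    have hzsupp : ∀ i, z i ≠ 0 → y i ≠ 0 := by
      intro i hzi hyi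
      exact hzi (by simp [hz, hyi, hWsupp i hyi])
    have hzcard : (univ.filter fun i => z i ≠ 0).card ≤ N := by
      have hsub : (univ.filter fun i => z i ≠ 0) ⊆ (univ.filter fun i => y i ≠ 0) := by
        intro i hi
        simp only [mem_filter, mem_univ, true_and] at *
        exact hzsupp i hi
      have hzi₁ : z i₁ = 0 := by
        simp only [hz, ht]
        rw [div_mul_cancel₀ _ hWi₁.ne', sub_self]
      have hyi₁ : y i₁ ≠ 0 := fun h => absurd (hWsupp i₁ h) hWi₁.ne'
      have hssub : (univ.filter fun i => z i ≠ 0) ⊂ (univ.filter fun i => y i ≠ 0) := by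
        refine ⟨hsub, fun hsup => ?_⟩
        have : i₁ ∈ univ.filter fun i => z i ≠ 0 := hsup (by simp [hyi₁])
        simp [hzi₁] at this
      have := Finset.card_lt_card hssub
      omega
    obtain ⟨z', hz'0, hz'sum, hz'li⟩ := ih z hzcard hz0
    exact ⟨z', hz'0, hz'sum.trans hzsum, hz'li⟩

noncomputable def comboMap {ι : Type*} [Fintype ι] {E : Type*} [AddCommGroup E] [Module ℝ E]
    (v : ι → E) : (ι → ℝ) →ₗ[ℝ] E where
  toFun y := ∑ i, y i • v i
  map_add' a b := by simp [add_smul, Finset.sum_add_distrib]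
  map_smul' r a := by simp [mul_smul, Finset.smul_sum]

lemma comboMap_image_isClosed {ι : Type*} [Fintype ι] {E : Type*} [NormedAddCommGroup E]
    [NormedSpace ℝ E] [FiniteDimensional ℝ E] (v : ι → E) (hv : LinearIndependent ℝ v) :
    IsClosed ((comboMap v) '' {y | 0 ≤ y}) := by
  have hker : LinearMap.ker (comboMap v) = ⊥ := by
    rw [LinearMap.ker_eq_bot']
    intro g hg
    funext i
    exact Fintype.linearIndependent_iff.mp hv g hg i
  have hemb := LinearMap.isClosedEmbedding_of_injective (f := comboMap v) hker
  have hpos : IsClosed {y : ι → ℝ | 0 ≤ y} := by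
    have : {y : ι → ℝ | 0 ≤ y} = ⋂ i, {y : ι → ℝ | 0 ≤ y i} := by
      ext y; simp [Pi.le_def]
    rw [this]
    exact isClosed_iInter fun i => isClosed_le continuous_const (continuous_apply i)
  exact hemb.isClosedMap _ hpos

lemma conic_caratheodory' {ι : Type*} [Fintype ι] [DecidableEq ι] {E : Type*} [AddCommGroup E]
    [Module ℝ E] (v : ι → E) (y : ι → ℝ) (hy : 0 ≤ y) :
    ∃ z : ι → ℝ, 0 ≤ z ∧ ∑ i, z i • v i = ∑ i, y i • v i ∧
      LinearIndependent ℝ (fun i : {i // z i ≠ 0} => v i) :=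
  conic_caratheodory v _ y le_rfl hy

lemma cone_isClosed {ι : Type*} [Fintype ι] [DecidableEq ι] {E : Type*} [NormedAddCommGroup E]
    [NormedSpace ℝ E] [FiniteDimensional ℝ E] (v : ι → E) :
    IsClosed {x : E | ∃ y : ι → ℝ, 0 ≤ y ∧ x = ∑ i, y i • v i} := by
  classical
  have key : {x : E | ∃ y : ι → ℝ, 0 ≤ y ∧ x = ∑ i, y i • v i} =
      ⋃ S : Finset ι, {x : E | LinearIndependent ℝ (fun i : {i // i ∈ S} => v i) ∧
        ∃ y : ι → ℝ, 0 ≤ y ∧ (∀ i, y i ≠ 0 → i ∈ S) ∧ x = ∑ i, y i • v i} := by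
    ext x
    simp only [Set.mem_iUnion, Set.mem_setOf_eq]
    constructor
    · rintro ⟨y, hy, rfl⟩
      obtain ⟨z, hz0, hzsum, hzli⟩ := conic_caratheodory' v y hy
      refine ⟨univ.filter fun i => z i ≠ 0, ?_, z, hz0, fun i hi => by simp [hi], hzsum.symm⟩
      exact (linearIndependent_equiv
        (Equiv.subtypeEquivRight (fun i => by simp))).mpr hzli
    · rintro ⟨S, hli, y, hy, hsupp, rfl⟩
      exact ⟨y, hy, rfl⟩
  rw [key]
  apply isClosed_iUnion_of_finite
  intro S
  by_cases hli : LinearIndependent ℝ (fun i : {i // i ∈ S} => v i)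
  · have himg : {x : E | LinearIndependent ℝ (fun i : {i // i ∈ S} => v i) ∧
        ∃ y : ι → ℝ, 0 ≤ y ∧ (∀ i, y i ≠ 0 → i ∈ S) ∧ x = ∑ i, y i • v i} =
        (comboMap (fun i : {i // i ∈ S} => v i)) '' {y | 0 ≤ y} := by
      ext x
      simp only [Set.mem_setOf_eq, Set.mem_image, hli, true_and]
      constructor
      · rintro ⟨y, hy, hsupp, rfl⟩
        refine ⟨fun i => y i, fun i => hy i, ?_⟩
        show ∑ i : {i // i ∈ S}, y ↑i • v ↑i = _
        rw [← Finset.sum_subtype S (fun i => Iff.rfl) (fun i => y i • v i)]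
        exact Finset.sum_subset (subset_univ S) (fun i _ hi => by
          have : y i = 0 := by by_contra h; exact hi (hsupp i h)
          rw [this, zero_smul])
      · rintro ⟨y', hy', rfl⟩
        refine ⟨fun i => if h : i ∈ S then y' ⟨i, h⟩ else 0, ?_, ?_, ?_⟩
        · intro i
          by_cases h : i ∈ S
          · simpa [h] using hy' ⟨i, h⟩
          · simp [h]
        · intro i hi
          by_contra h
          simp [h] at hi
        · show _ = ∑ i : ι, (if h : i ∈ S then y' ⟨i, h⟩ else 0) • v i
          rw [← Finset.sum_subset (subset_univ S) (fun i _ hi => by simp [hi])]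
          rw [Finset.sum_subtype S (fun i => Iff.rfl)
            (fun i => (if h : i ∈ S then y' ⟨i, h⟩ else 0) • v i)]
          show ∑ i : {i // i ∈ S}, y' i • v ↑i = _
          refine (Finset.sum_congr rfl fun i _ => ?_).symm
          simp [i.2]
    rw [himg]
    exact comboMap_image_isClosed _ hli
  · have : {x : E | LinearIndependent ℝ (fun i : {i // i ∈ S} => v i) ∧
        ∃ y : ι → ℝ, 0 ≤ y ∧ (∀ i, y i ≠ 0 → i ∈ S) ∧ x = ∑ i, y i • v i} = ∅ := by
      ext x; simp [hli]
    rw [this]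
    exact isClosed_empty


lemma farkas {ι κ : Type*} [Fintype ι] [Fintype κ] [DecidableEq ι] [DecidableEq κ]
    (M : Matrix ι κ ℝ) (d : ι → ℝ) (h : ¬ ∃ x : κ → ℝ, M.mulVec x ≤ d) :
    ∃ y : ι → ℝ, 0 ≤ y ∧ M.transpose.mulVec y = 0 ∧ d ⬝ᵥ y < 0 := by
  classical
  set v : (κ ⊕ κ) ⊕ ι → (ι → ℝ) :=
    Sum.elim (Sum.elim (fun j => M.mulVec (Pi.single j 1))
      (fun j => -(M.mulVec (Pi.single j 1)))) (fun i => Pi.single i 1) with hv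
  set C : Set (ι → ℝ) := {x | ∃ y : (κ ⊕ κ) ⊕ ι → ℝ, 0 ≤ y ∧ x = ∑ i, y i • v i} with hC
  have hmv : ∀ x : κ → ℝ, M.mulVec x = ∑ j, x j • M.mulVec (Pi.single j 1) := by
    intro x; funext i
    simp [Matrix.mulVec_single, Matrix.mulVec, dotProduct, Finset.sum_apply, mul_comm]
  have hdC : d ∉ C := by
    rintro ⟨y, hy, hd⟩
    apply h
    refine ⟨fun j => y (Sum.inl (Sum.inl j)) - y (Sum.inl (Sum.inr j)), ?_⟩
    have hsplit : ∑ i, y i • v i =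
        M.mulVec (fun j => y (Sum.inl (Sum.inl j)) - y (Sum.inl (Sum.inr j)))
          + fun i => y (Sum.inr i) := by
      rw [hmv]
      rw [Fintype.sum_sum_type, Fintype.sum_sum_type]
      have e1 : ∑ j, (y (Sum.inl (Sum.inl j)) - y (Sum.inl (Sum.inr j))) • M.mulVec (Pi.single j 1)
          = ∑ j, y (Sum.inl (Sum.inl j)) • v (Sum.inl (Sum.inl j))
            + ∑ j, y (Sum.inl (Sum.inr j)) • v (Sum.inl (Sum.inr j)) := by
        simp only [hv, Sum.elim_inl, Sum.elim_inr, smul_neg, sub_smul]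
        rw [Finset.sum_sub_distrib, Finset.sum_neg_distrib, sub_eq_add_neg]
      have e2 : (fun i => y (Sum.inr i)) = ∑ i, y (Sum.inr i) • v (Sum.inr i) := by
        funext i'
        simp [hv, Pi.single_apply, Finset.sum_apply, mul_ite]
      rw [e1, ← e2]
    rw [hd, hsplit]
    intro i
    simp only [Pi.add_apply]
    have := hy (Sum.inr i)
    simp only [Pi.zero_apply] at this
    linarith
  have hclosed : IsClosed C := cone_isClosed v
  have hconv : Convex ℝ C := by
    rintro p ⟨yp, hyp, rfl⟩ q ⟨yq, hyq, rfl⟩ a b ha hb hab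
    refine ⟨fun i => a * yp i + b * yq i, fun i => by
      have := hyp i; have := hyq i
      simp only [Pi.zero_apply] at *
      positivity, ?_⟩
    rw [Finset.smul_sum, Finset.smul_sum, ← Finset.sum_add_distrib]
    refine Finset.sum_congr rfl fun i _ => ?_
    rw [add_smul, smul_smul, smul_smul]
  obtain ⟨f, u, hfu, hud⟩ := geometric_hahn_banach_closed_point hconv hclosed hdC
  have h0C : (0 : ι → ℝ) ∈ C := ⟨0, le_rfl, by simp⟩
  have hu0 : 0 < u := by have := hfu 0 h0C; simpa using this
  have hscale : ∀ (t : ℝ), 0 ≤ t → ∀ c ∈ C, t • c ∈ C := by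
    rintro t ht c ⟨y, hy, rfl⟩
    refine ⟨fun i => t * y i, fun i => mul_nonneg ht (hy i), ?_⟩
    rw [Finset.smul_sum]
    refine Finset.sum_congr rfl fun i _ => ?_
    show t • (y i • v i) = (t * y i) • v i
    rw [smul_smul]
  have hfC : ∀ c ∈ C, f c ≤ 0 := by
    rintro c hc
    by_contra hfc
    push_neg at hfc
    have htc := hscale (u / f c) (div_nonneg hu0.le hfc.le) c hc
    have := hfu _ htc
    rw [map_smul] at this
    simp only [smul_eq_mul] at this
    rw [div_mul_cancel₀ _ hfc.ne'] at this
    exact lt_irrefl u this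
  have hgen : ∀ s0, v s0 ∈ C := by
    intro s0
    refine ⟨Pi.single s0 1, ?_, ?_⟩
    · intro s
      simp only [Pi.zero_apply, Pi.single_apply]
      split <;> norm_num
    · rw [eq_comm]
      simp [Pi.single_apply, ite_smul, Finset.sum_ite_eq']
  set Y : ι → ℝ := fun i => -f (Pi.single i 1) with hY
  have hsingle : ∀ i : ι, (fun j => if i = j then (1:ℝ) else 0) = Pi.single i 1 := by
    intro i; funext j; simp [Pi.single_apply, eq_comm]
  have hf : ∀ x : ι → ℝ, f x = ∑ i, x i * f (Pi.single i 1) := by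
    intro x
    have h2 := LinearMap.pi_apply_eq_sum_univ (f : (ι → ℝ) →ₗ[ℝ] ℝ) x
    simp only [ContinuousLinearMap.coe_coe, smul_eq_mul] at h2
    rw [h2]
    refine Finset.sum_congr rfl fun i _ => ?_
    rw [hsingle i]
  have hdot : ∀ x : ι → ℝ, x ⬝ᵥ Y = -f x := by
    intro x
    rw [hf x, dotProduct, ← Finset.sum_neg_distrib]
    refine Finset.sum_congr rfl fun i _ => ?_
    simp [hY, mul_neg]
  refine ⟨Y, ?_, ?_, ?_⟩
  · intro i
    have := hfC _ (hgen (Sum.inr i))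
    simp only [hv, Sum.elim_inr] at this
    simp only [Pi.zero_apply, hY]
    linarith
  · funext j
    show (Mᵀ *ᵥ Y) j = 0
    have h1 := hfC _ (hgen (Sum.inl (Sum.inl j)))
    have h2 := hfC _ (hgen (Sum.inl (Sum.inr j)))
    simp only [hv, Sum.elim_inl, Sum.elim_inr, map_neg] at h1 h2
    have hcol : f (M.mulVec (Pi.single j 1)) = 0 := le_antisymm h1 (by linarith)
    have : (M.mulVec (Pi.single j 1)) ⬝ᵥ Y = 0 := by rw [hdot, hcol, neg_zero]
    rw [← this]
    simp only [Matrix.mulVec, dotProduct, Matrix.transpose_apply]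
    refine Finset.sum_congr rfl fun i _ => ?_
    congr 1
    simp [Pi.single_apply, mul_ite]
  · rw [hdot]
    linarith


theorem strong_lp_duality {m n : ℕ} (A : Matrix (Fin m) (Fin n) ℝ) (b : Fin m → ℝ)
    (c : Fin n → ℝ)
    (hne : {v : ℝ | ∃ x : Fin n → ℝ, A.mulVec x ≤ b ∧ v = c ⬝ᵥ x}.Nonempty)
    (hbdd : BddAbove {v : ℝ | ∃ x : Fin n → ℝ, A.mulVec x ≤ b ∧ v = c ⬝ᵥ x}) :
    (∃ y : Fin m → ℝ, 0 ≤ y ∧ A.transpose.mulVec y = c) ∧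
    sSup {v : ℝ | ∃ x : Fin n → ℝ, A.mulVec x ≤ b ∧ v = c ⬝ᵥ x} =
      sInf {w : ℝ | ∃ y : Fin m → ℝ, A.transpose.mulVec y = c ∧ 0 ≤ y ∧ w = b ⬝ᵥ y} := by
  classical
  set P := {v : ℝ | ∃ x : Fin n → ℝ, A.mulVec x ≤ b ∧ v = c ⬝ᵥ x} with hP
  set D := {w : ℝ | ∃ y : Fin m → ℝ, A.transpose.mulVec y = c ∧ 0 ≤ y ∧ w = b ⬝ᵥ y} with hD
  have hdual : ∀ (y : Fin m → ℝ) (x : Fin n → ℝ),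
      y ⬝ᵥ (A.mulVec x) = (A.transpose.mulVec y) ⬝ᵥ x := by
    intro y x
    rw [Matrix.dotProduct_mulVec, ← Matrix.mulVec_transpose]
  have weak : ∀ v ∈ P, ∀ w ∈ D, v ≤ w := by
    rintro v ⟨x, hx, rfl⟩ w ⟨y, hyc, hy0, rfl⟩
    calc c ⬝ᵥ x = (A.transpose.mulVec y) ⬝ᵥ x := by rw [hyc]
      _ = y ⬝ᵥ (A.mulVec x) := (hdual y x).symm
      _ ≤ y ⬝ᵥ b := by
          refine Finset.sum_le_sum fun i _ => ?_
          exact mul_le_mul_of_nonneg_left (hx i) (hy0 i)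
      _ = b ⬝ᵥ y := dotProduct_comm _ _
  set s := sSup P with hs
  have key : ∀ ε : ℝ, 0 < ε → ∃ y : Fin m → ℝ,
      0 ≤ y ∧ A.transpose.mulVec y = c ∧ b ⬝ᵥ y < s + ε := by
    intro ε hε
    set M : Matrix (Fin m ⊕ Unit) (Fin n) ℝ := Matrix.of (Sum.elim A (fun _ => -c)) with hM
    set d : Fin m ⊕ Unit → ℝ := Sum.elim b (fun _ => -(s + ε)) with hd
    have hinf : ¬ ∃ x : Fin n → ℝ, M.mulVec x ≤ d := by
      rintro ⟨x, hx⟩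
      have hAx : A.mulVec x ≤ b := by
        intro i
        have := hx (Sum.inl i)
        simpa [hM, hd, Matrix.mulVec, dotProduct, Sum.elim_inl (f := (A : Fin m → Fin n → ℝ)), Sum.elim_inr (f := (A : Fin m → Fin n → ℝ))] using this
      have hcx : -(c ⬝ᵥ x) ≤ -(s + ε) := by
        have := hx (Sum.inr ())
        simpa [hM, hd, Matrix.mulVec, dotProduct, Finset.sum_neg_distrib, Sum.elim_inl (f := (A : Fin m → Fin n → ℝ)), Sum.elim_inr (f := (A : Fin m → Fin n → ℝ))] using this
      have hmem : c ⬝ᵥ x ∈ P := ⟨x, hAx, rfl⟩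
      have := le_csSup hbdd hmem
      rw [← hs] at this
      linarith
    obtain ⟨Y, hY0, hYc, hYd⟩ := farkas M d hinf
    set y : Fin m → ℝ := fun i => Y (Sum.inl i) with hy
    set lam : ℝ := Y (Sum.inr ()) with hlam
    have hyc : A.transpose.mulVec y = lam • c := by
      funext j
      have := congrFun hYc j
      simp only [Matrix.mulVec, dotProduct, Matrix.transpose_apply, Pi.zero_apply,
        Fintype.sum_sum_type] at this
      simp only [Matrix.mulVec, dotProduct, Matrix.transpose_apply, Pi.smul_apply,
        smul_eq_mul]
      simp only [hM, Matrix.of_apply, Sum.elim_inl, Sum.elim_inr, Sum.elim_inl (f := (A : Fin m → Fin n → ℝ)), Sum.elim_inr (f := (A : Fin m → Fin n → ℝ))] at this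
      simp only [Fintype.sum_unique, Pi.neg_apply] at this
      rw [show (default : Unit) = () from rfl] at this
      simp only [hy, hlam, Pi.neg_apply]
      linarith [this]
    have hby : b ⬝ᵥ y - (s + ε) * lam < 0 := by
      have : d ⬝ᵥ Y = b ⬝ᵥ y - (s + ε) * lam := by
        simp only [dotProduct, Fintype.sum_sum_type, hd, Sum.elim_inl, Sum.elim_inr,
          Fintype.sum_unique, hy, hlam]
        ring
      linarith [hYd, this ▸ hYd]
    have hlam0 : 0 ≤ lam := hY0 (Sum.inr ())
    have hlampos : 0 < lam := by
      rcases hlam0.lt_or_eq with h | h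
      · exact h
      · exfalso
        obtain ⟨v₀, x₀, hx₀, _⟩ := hne
        have h1 : y ⬝ᵥ (A.mulVec x₀) = 0 := by
          rw [hdual, hyc, ← h]
          simp
        have h2 : y ⬝ᵥ (A.mulVec x₀) ≤ y ⬝ᵥ b := by
          refine Finset.sum_le_sum fun i _ => ?_
          exact mul_le_mul_of_nonneg_left (hx₀ i) (hY0 (Sum.inl i))
        rw [h1, dotProduct_comm] at h2
        rw [← h] at hby
        linarith
    refine ⟨lam⁻¹ • y, ?_, ?_, ?_⟩
    · intro i
      simp only [Pi.smul_apply, smul_eq_mul, Pi.zero_apply]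
      exact mul_nonneg (inv_nonneg.mpr hlam0) (hY0 (Sum.inl i))
    · rw [Matrix.mulVec_smul, hyc, smul_smul, inv_mul_cancel₀ hlampos.ne', one_smul]
    · rw [dotProduct_smul]
      have := mul_lt_mul_of_pos_left (show b ⬝ᵥ y < (s + ε) * lam by linarith)
        (inv_pos.mpr hlampos)
      calc lam⁻¹ • (b ⬝ᵥ y) = lam⁻¹ * (b ⬝ᵥ y) := rfl
        _ < lam⁻¹ * ((s + ε) * lam) := this
        _ = s + ε := by field_simp
  obtain ⟨y₁, hy₁0, hy₁c, _⟩ := key 1 one_pos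
  have hDne : D.Nonempty := ⟨b ⬝ᵥ y₁, y₁, hy₁c, hy₁0, rfl⟩
  have hDbdd : BddBelow D := by
    obtain ⟨v₀, hv₀⟩ := hne
    exact ⟨v₀, fun w hw => weak v₀ hv₀ w hw⟩
  refine ⟨⟨y₁, hy₁0, hy₁c⟩, ?_⟩
  refine le_antisymm ?_ ?_
  · refine le_csInf hDne fun w hw => csSup_le hne fun v hv => weak v hv w hw
  · refine le_of_forall_pos_le_add fun ε hε => ?_
    obtain ⟨y, hy0, hyc, hby⟩ := key ε hε
    exact (csInf_le hDbdd ⟨y, hyc, hy0, rfl⟩).trans hby.le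
end

section
/- (Strong duality, origin-feasible case) Let A be a real m×n matrix, b ∈ ℝᵐ with b ≥ 0, c ∈ ℝⁿ with c ≠ 0. If sup{⟨c,x⟩ : Ax ≤ b} is finite, then there exists y ≥ 0 with Aᵀy = c, and sup{⟨c,x⟩ : Ax ≤ b} = inf{⟨b,y⟩ : Aᵀy = c, y ≥ 0}. -/
open scoped Matrix
open scoped RealInnerProductSpace
open Finset


/-- Carathéodory for cones: any nonnegative combination can be rewritten as a nonnegative
combination supported on a linearly independent subfamily. -/
lemma carath_cone {E : Type*} [AddCommGroup E] [Module ℝ E] {ι : Type*} [Fintype ι]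
    [DecidableEq ι] (v : ι → E) (s : Finset ι) :
    ∀ (y : ι → ℝ), (∀ i, 0 ≤ y i) → (∀ i ∉ s, y i = 0) →
      ∃ t : Finset ι, t ⊆ s ∧ LinearIndependent ℝ (fun i : t => v i) ∧
        ∃ z : ι → ℝ, (∀ i, 0 ≤ z i) ∧ (∀ i ∉ t, z i = 0) ∧
          ∑ i, z i • v i = ∑ i, y i • v i := by
  classical
  induction s using Finset.strongInduction with
  | _ s ih =>
    intro y hy hsupp
    by_cases hli : LinearIndependent ℝ (fun i : s => v i)
    · exact ⟨s, subset_rfl, hli, y, hy, hsupp, rfl⟩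
    · obtain ⟨g, hg, i₁, hi₁⟩ := Fintype.not_linearIndependent_iff.mp hli
      -- extend g to ι, choosing sign so that some coefficient is positive
      have key : ∃ c : ι → ℝ, (∀ i ∉ s, c i = 0) ∧ (∑ i, c i • v i = 0) ∧
          ∃ i ∈ s, 0 < c i := by
        rcases lt_or_gt_of_ne hi₁ with hneg | hpos
        · refine ⟨fun i => if h : i ∈ s then -g ⟨i, h⟩ else 0, fun i hi => dif_neg hi, ?_,
            i₁, i₁.2, by simp [neg_pos.mpr hneg]⟩
          rw [← Finset.sum_subset (Finset.subset_univ s)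
            (fun i _ hi => by simp [dif_neg hi])]
          rw [← Finset.sum_attach s (fun i => (if h : i ∈ s then -g ⟨i, h⟩ else 0) • v i)]
          simp only [Subtype.coe_eta, dif_pos (Subtype.prop _)]
          simp only [neg_smul, Finset.sum_neg_distrib, neg_eq_zero]
          exact hg
        · refine ⟨fun i => if h : i ∈ s then g ⟨i, h⟩ else 0, fun i hi => dif_neg hi, ?_,
            i₁, i₁.2, by simpa using hpos⟩
          rw [← Finset.sum_subset (Finset.subset_univ s)
            (fun i _ hi => by simp [dif_neg hi])]
          rw [← Finset.sum_attach s (fun i => (if h : i ∈ s then g ⟨i, h⟩ else 0) • v i)]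
          simp only [Subtype.coe_eta, dif_pos (Subtype.prop _)]
          exact hg
      obtain ⟨c, hcs, hcsum, j₁, hj₁s, hj₁pos⟩ := key
      set T : Finset ι := s.filter (fun i => 0 < c i) with hT
      have hTne : T.Nonempty := ⟨j₁, Finset.mem_filter.mpr ⟨hj₁s, hj₁pos⟩⟩
      obtain ⟨i₀, hi₀T, hmin⟩ := T.exists_min_image (fun i => y i / c i) hTne
      have hci₀ : 0 < c i₀ := (Finset.mem_filter.mp hi₀T).2
      have hi₀s : i₀ ∈ s := (Finset.mem_filter.mp hi₀T).1
      set τ : ℝ := y i₀ / c i₀ with hτ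
      have hτ0 : 0 ≤ τ := div_nonneg (hy i₀) hci₀.le
      set z : ι → ℝ := fun i => y i - τ * c i with hz
      have hz0 : ∀ i, 0 ≤ z i := by
        intro i
        by_cases hcpos : 0 < c i
        · by_cases his : i ∈ s
          · have hiT : i ∈ T := Finset.mem_filter.mpr ⟨his, hcpos⟩
            have := hmin i hiT
            have : τ * c i ≤ y i := by
              rw [hτ] at this ⊢
              exact (le_div_iff₀ hcpos).mp this
            simpa [hz] using sub_nonneg.mpr this
          · simp [hz, hcs i his, hsupp i his]
        · have : τ * c i ≤ 0 := mul_nonpos_of_nonneg_of_nonpos hτ0 (not_lt.mp hcpos)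
          have := sub_nonneg.mpr (this.trans (hy i))
          simp only [hz]
          nlinarith [hy i]
      have hzi₀ : z i₀ = 0 := by
        simp [hz, hτ, div_mul_cancel₀ _ hci₀.ne']
      have hzsupp : ∀ i ∉ s.erase i₀, z i = 0 := by
        intro i hi
        by_cases h : i = i₀
        · subst h; exact hzi₀
        · have his : i ∉ s := fun hmem => hi (Finset.mem_erase.mpr ⟨h, hmem⟩)
          simp [hz, hsupp i his, hcs i his]
      have hzsum : ∑ i, z i • v i = ∑ i, y i • v i := by
        simp only [hz, sub_smul, mul_smul, Finset.sum_sub_distrib]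
        rw [← Finset.smul_sum, hcsum, smul_zero, sub_zero]
      obtain ⟨t, hts, hlit, z', hz', hz'supp, hz'sum⟩ :=
        ih (s.erase i₀) (Finset.erase_ssubset hi₀s) z hz0 hzsupp
      exact ⟨t, hts.trans (Finset.erase_subset _ _), hlit, z', hz', hz'supp,
        hz'sum.trans hzsum⟩

/-- A finitely generated cone in Euclidean space is closed. -/
lemma isClosed_fg_cone {N : ℕ} {ι : Type*} [Fintype ι] (v : ι → EuclideanSpace ℝ (Fin N)) :
    IsClosed {x : EuclideanSpace ℝ (Fin N) |
      ∃ y : ι → ℝ, (∀ i, 0 ≤ y i) ∧ x = ∑ i, y i • v i} := by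
  classical
  have hunion : {x : EuclideanSpace ℝ (Fin N) | ∃ y : ι → ℝ, (∀ i, 0 ≤ y i) ∧ x = ∑ i, y i • v i}
      = ⋃ t : Finset ι, {x | LinearIndependent ℝ (fun i : t => v i) ∧
          ∃ y : ι → ℝ, (∀ i, 0 ≤ y i) ∧ (∀ i ∉ t, y i = 0) ∧ x = ∑ i, y i • v i} := by
    ext x
    constructor
    · rintro ⟨y, hy, rfl⟩
      obtain ⟨t, _, hli, z, hz, hzsupp, hzsum⟩ :=
        carath_cone v Finset.univ y hy (by simp)
      exact Set.mem_iUnion.mpr ⟨t, hli, z, hz, hzsupp, hzsum.symm⟩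
    · rintro ⟨_, ⟨t, rfl⟩, hli, y, hy, _, rfl⟩
      exact ⟨y, hy, rfl⟩
  rw [hunion]
  apply isClosed_iUnion_of_finite
  intro t
  by_cases hli : LinearIndependent ℝ (fun i : t => v i)
  swap
  · convert isClosed_empty
    ext x; simp [hli]
  -- the piece is the image of the nonnegative orthant under an injective linear map
  let ψ : (↥t → ℝ) →ₗ[ℝ] EuclideanSpace ℝ (Fin N) :=
    { toFun := fun z => ∑ i, z i • v i
      map_add' := by intro a b; simp [add_smul, Finset.sum_add_distrib]
      map_smul' := by intro r a; simp [smul_smul, Finset.smul_sum] }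
  have hker : LinearMap.ker ψ = ⊥ := by
    rw [LinearMap.ker_eq_bot']
    intro z hz
    funext i
    exact Fintype.linearIndependent_iff.mp hli z hz i
  have hemb : Topology.IsClosedEmbedding ψ := LinearMap.isClosedEmbedding_of_injective hker
  have himg : {x : EuclideanSpace ℝ (Fin N) | LinearIndependent ℝ (fun i : t => v i) ∧
      ∃ y : ι → ℝ, (∀ i, 0 ≤ y i) ∧ (∀ i ∉ t, y i = 0) ∧ x = ∑ i, y i • v i}
      = ψ '' (Set.Ici 0) := by
    ext x
    constructor
    · rintro ⟨-, y, hy, hysupp, rfl⟩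
      refine ⟨fun i => y i, fun i => hy i, ?_⟩
      show ∑ i : t, y (i : ι) • v i = ∑ i, y i • v i
      rw [Finset.sum_coe_sort t (fun i => y i • v i)]
      exact Finset.sum_subset (Finset.subset_univ t)
        (fun i _ hi => by simp [hysupp i hi])
    · rintro ⟨z, hz, rfl⟩
      refine ⟨hli, fun i => if h : i ∈ t then z ⟨i, h⟩ else 0, ?_, fun i hi => dif_neg hi, ?_⟩
      · intro i
        by_cases h : i ∈ t
        · simpa [h] using hz ⟨i, h⟩
        · simp [h]
      · show (∑ i : t, z i • v i) = ∑ i : ι, (if h : i ∈ t then z ⟨i, h⟩ else 0) • v i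
        rw [← Finset.sum_subset (Finset.subset_univ t) (fun i _ hi => by simp [dif_neg hi]),
          ← Finset.sum_coe_sort t (fun i => (if h : i ∈ t then z ⟨i, h⟩ else 0) • v i)]
        refine Finset.sum_congr rfl (fun i _ => ?_)
        rw [dif_pos i.2, Subtype.coe_eta]
  rw [himg]
  exact hemb.isClosedMap _ isClosed_Ici

lemma piLp_sum_apply {κ ι : Type*} [Fintype ι] [Fintype κ] (y : ι → ℝ)
    (w : ι → EuclideanSpace ℝ κ) (j : κ) :
    (∑ o, y o • w o) j = ∑ o, y o * w o j := by
  classical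
  have : ∀ s : Finset ι, (∑ o ∈ s, y o • w o) j = ∑ o ∈ s, y o * w o j := by
    intro s
    induction s using Finset.cons_induction with
    | empty => simp [PiLp.zero_apply]
    | cons a s ha ih =>
        rw [Finset.sum_cons, Finset.sum_cons, PiLp.add_apply, PiLp.smul_apply, ih, smul_eq_mul]
  exact this Finset.univ

lemma euclid_inner_eq {κ : Type*} [Fintype κ] (x y : EuclideanSpace ℝ κ) :
    ⟪x, y⟫ = ∑ j, x j * y j := by
  simp [PiLp.inner_apply, RCLike.inner_apply, mul_comm]

theorem strong_lp_duality_origin_feasible {m n : ℕ} (A : Matrix (Fin m) (Fin n) ℝ)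
    (b : Fin m → ℝ) (hb : 0 ≤ b) (c : Fin n → ℝ) (hc : c ≠ 0)
    (hbdd : BddAbove {v : ℝ | ∃ x : Fin n → ℝ, A.mulVec x ≤ b ∧ v = c ⬝ᵥ x}) :
    (∃ y : Fin m → ℝ, 0 ≤ y ∧ A.transpose.mulVec y = c) ∧
    sSup {v : ℝ | ∃ x : Fin n → ℝ, A.mulVec x ≤ b ∧ v = c ⬝ᵥ x} =
      sInf {w : ℝ | ∃ y : Fin m → ℝ, A.transpose.mulVec y = c ∧ 0 ≤ y ∧ w = b ⬝ᵥ y} := by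
  classical
  set S : Set ℝ := {v : ℝ | ∃ x : Fin n → ℝ, A.mulVec x ≤ b ∧ v = c ⬝ᵥ x} with hS
  have hS0 : (0 : ℝ) ∈ S := ⟨0, by simpa [Matrix.mulVec_zero] using hb, by simp⟩
  have hSne : S.Nonempty := ⟨0, hS0⟩
  set σ : ℝ := sSup S with hσ
  -- the cone generated by the rows of [A | b] and the extra vector (0, 1)
  set w : Option (Fin m) → EuclideanSpace ℝ (Fin (n + 1)) :=
    fun o => o.elim (WithLp.toLp 2 (Fin.snoc 0 1)) (fun i => WithLp.toLp 2 (Fin.snoc (A i) (b i))) with hw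
  set K : ConvexCone ℝ (EuclideanSpace ℝ (Fin (n + 1))) :=
    { carrier := {x | ∃ y : Option (Fin m) → ℝ, (∀ o, 0 ≤ y o) ∧ x = ∑ o, y o • w o}
      smul_mem' := by
        rintro a ha x ⟨y, hy, rfl⟩
        refine ⟨fun o => a * y o, fun o => mul_nonneg ha.le (hy o), ?_⟩
        rw [Finset.smul_sum]
        exact Finset.sum_congr rfl fun o _ => by rw [smul_smul]
      add_mem' := by
        rintro x ⟨y, hy, rfl⟩ x' ⟨y', hy', rfl⟩
        refine ⟨y + y', fun o => add_nonneg (hy o) (hy' o), ?_⟩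
        rw [← Finset.sum_add_distrib]
        exact Finset.sum_congr rfl fun o _ => by rw [Pi.add_apply, add_smul] } with hK
  have hKne : ((K : Set (EuclideanSpace ℝ (Fin (n + 1)))) : Set _).Nonempty :=
    ⟨0, ⟨0, fun o => le_rfl, by simp⟩⟩
  have hKclosed : IsClosed (K : Set (EuclideanSpace ℝ (Fin (n + 1)))) := isClosed_fg_cone w
  have hwK : ∀ o₀, w o₀ ∈ K := by
    intro o₀
    refine ⟨fun o => if o = o₀ then 1 else 0, fun o => by positivity, ?_⟩
    simp [ite_smul]
  have key : (WithLp.toLp 2 (Fin.snoc c σ) : EuclideanSpace ℝ (Fin (n + 1))) ∈ K := by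
    by_contra hnot
    obtain ⟨u, hu1, hu2⟩ : ∃ u : EuclideanSpace ℝ (Fin (n + 1)),
        (∀ x ∈ K, 0 ≤ ⟪x, u⟫) ∧ ⟪WithLp.toLp 2 (Fin.snoc c σ), u⟫ < 0 := by
      obtain ⟨f, s, hf1, hf2⟩ := geometric_hahn_banach_closed_point K.convex hKclosed hnot
      have h0 : (0 : EuclideanSpace ℝ (Fin (n + 1))) ∈ K := ⟨0, fun o => le_rfl, by simp⟩
      have hs : 0 < s := by simpa using hf1 0 h0
      have hle : ∀ x ∈ K, f x ≤ 0 := by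
        intro x hx
        by_contra hpos
        push_neg at hpos
        have hmem : ((s / f x + 1) • x) ∈ K := K.smul_mem (add_pos (div_pos hs hpos) one_pos) hx
        have := hf1 _ hmem
        rw [map_smul, smul_eq_mul, add_mul, div_mul_cancel₀ _ hpos.ne'] at this
        linarith
      refine ⟨-(InnerProductSpace.toDual ℝ _).symm f, fun x hx => ?_, ?_⟩
      · rw [inner_neg_right, real_inner_comm, InnerProductSpace.toDual_symm_apply]
        linarith [hle x hx]
      · rw [inner_neg_right, real_inner_comm, InnerProductSpace.toDual_symm_apply]
        linarith
    obtain ⟨d, r, hr0, hrow, hcs⟩ :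
        ∃ (d : Fin n → ℝ) (r : ℝ), 0 ≤ r ∧
          (∀ i, 0 ≤ ∑ j, A i j * d j + b i * r) ∧ (∑ j, c j * d j + σ * r < 0) := by
      refine ⟨fun j => u (Fin.castSucc j), u (Fin.last n), ?_, ?_, ?_⟩
      · have := hu1 (w none) (hwK none)
        rw [euclid_inner_eq] at this
        simpa [hw, Fin.sum_univ_castSucc, Fin.snoc_castSucc, Fin.snoc_last] using this
      · intro i
        have := hu1 (w (some i)) (hwK (some i))
        rw [euclid_inner_eq] at this
        simpa [hw, Fin.sum_univ_castSucc, Fin.snoc_castSucc, Fin.snoc_last] using this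
      · rw [euclid_inner_eq, Fin.sum_univ_castSucc] at hu2
        simp only [Fin.snoc_castSucc, Fin.snoc_last] at hu2
        have heq : ∑ j, c j * u (Fin.castSucc j) = ∑ j, u (Fin.castSucc j) * c j :=
          Finset.sum_congr rfl fun j _ => mul_comm _ _
        rw [heq, mul_comm σ (u (Fin.last n))]
        linarith [heq]
    rcases eq_or_lt_of_le hr0 with hr0' | hrpos
    · -- r = 0 : unbounded direction
      obtain ⟨M, hM⟩ := hbdd
      have hM0 : (0 : ℝ) ≤ M := hM hS0
      have hAd : ∀ i, (A.mulVec (fun j => -d j)) i ≤ 0 := by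
        intro i
        have h1 := hrow i
        rw [← hr0'] at h1
        simp only [mul_zero, add_zero] at h1
        show ∑ j, A i j * (-d j) ≤ 0
        simpa [mul_neg, Finset.sum_neg_distrib] using h1
      have hp : 0 < c ⬝ᵥ (fun j => -d j) := by
        have h1 := hcs
        rw [← hr0'] at h1
        simp only [mul_zero, add_zero] at h1
        show 0 < ∑ j, c j * (-d j)
        simpa [mul_neg, Finset.sum_neg_distrib] using h1
      have ht0 : 0 ≤ (M + 1) / (c ⬝ᵥ (fun j => -d j)) := div_nonneg (by linarith) hp.le
      have hfeas : A.mulVec (((M + 1) / (c ⬝ᵥ (fun j => -d j))) • fun j => -d j) ≤ b := by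
        intro i
        rw [Matrix.mulVec_smul]
        calc (((M + 1) / (c ⬝ᵥ (fun j => -d j))) • A.mulVec fun j => -d j) i
            = ((M + 1) / (c ⬝ᵥ (fun j => -d j))) * (A.mulVec fun j => -d j) i := rfl
          _ ≤ 0 := mul_nonpos_of_nonneg_of_nonpos ht0 (hAd i)
          _ ≤ b i := hb i
      have hmem : c ⬝ᵥ (((M + 1) / (c ⬝ᵥ (fun j => -d j))) • fun j => -d j) ∈ S :=
        ⟨_, hfeas, rfl⟩
      have hvv : c ⬝ᵥ (((M + 1) / (c ⬝ᵥ (fun j => -d j))) • fun j => -d j) = M + 1 := by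
        rw [dotProduct_smul, smul_eq_mul, div_mul_cancel₀ _ hp.ne']
      have hle := hM hmem
      rw [hvv] at hle
      linarith
    · -- r > 0 : a feasible point with value > σ
      have hfeas : A.mulVec (fun j => -d j / r) ≤ b := by
        intro i
        show ∑ j, A i j * (-d j / r) ≤ b i
        have heq : ∑ j, A i j * (-d j / r) = (-(∑ j, A i j * d j)) / r := by
          rw [← Finset.sum_neg_distrib, Finset.sum_div]
          exact Finset.sum_congr rfl fun j _ => by ring
        rw [heq, div_le_iff₀ hrpos]
        have := hrow i
        nlinarith
      have hval : σ < c ⬝ᵥ (fun j => -d j / r) := by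
        show σ < ∑ j, c j * (-d j / r)
        have heq : ∑ j, c j * (-d j / r) = (-(∑ j, c j * d j)) / r := by
          rw [← Finset.sum_neg_distrib, Finset.sum_div]
          exact Finset.sum_congr rfl fun j _ => by ring
        rw [heq, lt_div_iff₀ hrpos]
        nlinarith
      have hmem : c ⬝ᵥ (fun j => -d j / r) ∈ S := ⟨_, hfeas, rfl⟩
      have : c ⬝ᵥ (fun j => -d j / r) ≤ σ := le_csSup hbdd hmem
      linarith
  -- extract dual solution from key
  obtain ⟨y, hy, heq⟩ := key
  have hcoord : ∀ j : Fin (n + 1), (Fin.snoc c σ : Fin (n + 1) → ℝ) j = ∑ o, y o * w o j :=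
    fun j => (congrArg (fun x : EuclideanSpace ℝ (Fin (n + 1)) => x j) heq).trans (piLp_sum_apply y w j)
  have hy'0 : (0 : Fin m → ℝ) ≤ fun i => y (some i) := fun i => hy (some i)
  have htrans : A.transpose.mulVec (fun i => y (some i)) = c := by
    funext j
    have h1 := hcoord (Fin.castSucc j)
    rw [Fin.snoc_castSucc, Fintype.sum_option] at h1
    simp only [hw, Option.elim, Fin.snoc_castSucc, Pi.zero_apply, mul_zero, zero_add] at h1
    show ∑ i, A.transpose j i * y (some i) = c j
    rw [h1]
    exact Finset.sum_congr rfl fun i _ => by rw [Matrix.transpose_apply, mul_comm]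
  have hlast : σ = y none + ∑ i, y (some i) * b i := by
    have h1 := hcoord (Fin.last n)
    rw [Fin.snoc_last, Fintype.sum_option] at h1
    simpa [hw] using h1
  have hbv : b ⬝ᵥ (fun i => y (some i)) = ∑ i, y (some i) * b i :=
    Finset.sum_congr rfl (fun i _ => mul_comm (b i) (y (some i)))
  have hbv' : b ⬝ᵥ (fun i => y (some i)) ≤ σ := by
    rw [hbv]
    have := hy none
    linarith
  -- weak duality
  have weak : ∀ (x : Fin n → ℝ) (yy : Fin m → ℝ), A.mulVec x ≤ b → 0 ≤ yy →
      A.transpose.mulVec yy = c → c ⬝ᵥ x ≤ b ⬝ᵥ yy := by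
    intro x yy hx hyy htr
    have hyy' : ∀ i, 0 ≤ yy i := fun i => hyy i
    have hx' : ∀ i, A.mulVec x i ≤ b i := fun i => hx i
    have h1 : c ⬝ᵥ x = yy ⬝ᵥ A.mulVec x := by
      rw [← htr, Matrix.mulVec_transpose, ← Matrix.dotProduct_mulVec]
    rw [h1, dotProduct_comm b yy]
    exact Finset.sum_le_sum fun i _ => mul_le_mul_of_nonneg_left (hx' i) (hyy' i)
  set T : Set ℝ :=
    {w' : ℝ | ∃ yy : Fin m → ℝ, A.transpose.mulVec yy = c ∧ 0 ≤ yy ∧ w' = b ⬝ᵥ yy} with hT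
  have hmemT : b ⬝ᵥ (fun i => y (some i)) ∈ T := ⟨_, htrans, hy'0, rfl⟩
  refine ⟨⟨_, hy'0, htrans⟩, ?_⟩
  have hub : ∀ w' ∈ T, σ ≤ w' := by
    rintro w' ⟨yy, h1, h2, rfl⟩
    exact csSup_le hSne (by rintro v ⟨x, hx, rfl⟩; exact weak x yy hx h2 h1)
  have h1 : sInf T ≤ σ := le_trans (csInf_le ⟨σ, fun w' hw' => hub w' hw'⟩ hmemT) hbv'
  have h2 : σ ≤ sInf T := le_csInf ⟨_, hmemT⟩ hub
  exact le_antisymm h2 h1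
end
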